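/- The two first integrals F and G of the Vanhaecke system are in involution: their Poisson bracket {F, G} = F_{p1} G_{q1} + F_{p2} G_{q2} − F_{q1} G_{p1} − F_{q2} G_{p2} vanishes identically as a polynomial. -/

import Mathlib

lemma vanhaecke_aux (c d e f g h x : ℝ) :
    deriv (fun y : ℝ => (c - d*y)^2 + e*(f + g*y^2 + h*y^4)) x
      = 2*(c - d*x)*(-d) + e*(g*(2*x) + h*(4*x^3)) := by
  have hd : HasDerivAt (fun y : ℝ => c - d*y) (-d) x := by
    simpa using ((hasDerivAt_id x).const_mul d).const_sub c
  have h2 := hd.pow 2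
  have hy2 : HasDerivAt (fun y : ℝ => y^2) (2*x) x := by
    simpa using hasDerivAt_pow 2 x
  have hy4 : HasDerivAt (fun y : ℝ => y^4) (4*x^3) x := by
    simpa using hasDerivAt_pow 4 x
  have h3 := (((hy2.const_mul g).add (hy4.const_mul h)).const_add f).const_mul e
  have h4 := h2.add h3
  have h5 : (fun y : ℝ => (c - d*y)^2 + e*(f + (g*y^2 + h*y^4)))
      = fun y : ℝ => (c - d*y)^2 + e*(f + g*y^2 + h*y^4) := by
    funext y; ring
  rw [← h5, HasDerivAt.deriv (f := fun y : ℝ => (c - d*y)^2 + e*(f + (g*y^2 + h*y^4))) h4]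
  norm_num

/-- The integrals `F` and `G` of the Vanhaecke system are in involution:
`{F,G} = F_{p1} G_{q1} + F_{p2} G_{q2} - F_{q1} G_{p1} - F_{q2} G_{p2} = 0`. -/
theorem vanhaecke_F_G_involution (a b : ℝ) (F G : ℝ → ℝ → ℝ → ℝ → ℝ)
    (hF : ∀ q1 q2 p1 p2, F q1 q2 p1 p2 =
      (p2*q1 - p1*q2)^2 - (2*q1^4 + 2*q1^2*q2^2 + 2*a*q1^2 + p1^2)*(a-b))
    (hG : ∀ q1 q2 p1 p2, G q1 q2 p1 p2 =
      (p2*q1 - p1*q2)^2 + (2*q1^2*q2^2 + 2*q2^4 + 2*b*q2^2 + p2^2)*(a-b)) :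
    ∀ q1 q2 p1 p2 : ℝ,
      deriv (fun x => F q1 q2 x p2) p1 * deriv (fun x => G x q2 p1 p2) q1
      + deriv (fun x => F q1 q2 p1 x) p2 * deriv (fun x => G q1 x p1 p2) q2
      - deriv (fun x => F x q2 p1 p2) q1 * deriv (fun x => G q1 q2 x p2) p1
      - deriv (fun x => F q1 x p1 p2) q2 * deriv (fun x => G q1 q2 p1 x) p2 = 0 := by
  intro q1 q2 p1 p2
  have eFp1 : (fun x => F q1 q2 x p2) = fun x : ℝ =>
      (p2*q1 - q2*x)^2 + (b-a)*((2*q1^4 + 2*q1^2*q2^2 + 2*a*q1^2) + 1*x^2 + 0*x^4) := by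
    funext x; rw [hF]; ring
  have eFp2 : (fun x => F q1 q2 p1 x) = fun x : ℝ =>
      (-(p1*q2) - (-q1)*x)^2 + (b-a)*((2*q1^4 + 2*q1^2*q2^2 + 2*a*q1^2 + p1^2) + 0*x^2 + 0*x^4) := by
    funext x; rw [hF]; ring
  have eFq1 : (fun x => F x q2 p1 p2) = fun x : ℝ =>
      (-(p1*q2) - (-p2)*x)^2 + (b-a)*(p1^2 + (2*q2^2 + 2*a)*x^2 + 2*x^4) := by
    funext x; rw [hF]; ring
  have eFq2 : (fun x => F q1 x p1 p2) = fun x : ℝ =>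
      (p2*q1 - p1*x)^2 + (b-a)*((2*q1^4 + 2*a*q1^2 + p1^2) + (2*q1^2)*x^2 + 0*x^4) := by
    funext x; rw [hF]; ring
  have eGq1 : (fun x => G x q2 p1 p2) = fun x : ℝ =>
      (-(p1*q2) - (-p2)*x)^2 + (a-b)*((2*q2^4 + 2*b*q2^2 + p2^2) + (2*q2^2)*x^2 + 0*x^4) := by
    funext x; rw [hG]; ring
  have eGq2 : (fun x => G q1 x p1 p2) = fun x : ℝ =>
      (p2*q1 - p1*x)^2 + (a-b)*(p2^2 + (2*q1^2 + 2*b)*x^2 + 2*x^4) := by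
    funext x; rw [hG]; ring
  have eGp1 : (fun x => G q1 q2 x p2) = fun x : ℝ =>
      (p2*q1 - q2*x)^2 + (a-b)*((2*q1^2*q2^2 + 2*q2^4 + 2*b*q2^2 + p2^2) + 0*x^2 + 0*x^4) := by
    funext x; rw [hG]; ring
  have eGp2 : (fun x => G q1 q2 p1 x) = fun x : ℝ =>
      (-(p1*q2) - (-q1)*x)^2 + (a-b)*((2*q1^2*q2^2 + 2*q2^4 + 2*b*q2^2) + 1*x^2 + 0*x^4) := by
    funext x; rw [hG]; ring
  rw [eFp1, eFp2, eFq1, eFq2, eGq1, eGq2, eGp1, eGp2,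
    vanhaecke_aux, vanhaecke_aux, vanhaecke_aux, vanhaecke_aux,
    vanhaecke_aux, vanhaecke_aux, vanhaecke_aux, vanhaecke_aux]
  ring
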